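/- (Abstract form of Theorem MW.) Let H be a real Hilbert space, v : (0, ∞) → H strongly measurable with ‖v(t)‖ ≤ C·t for all t > 0 (for some constant C ≥ 0) and ∫₀^∞ t^{−3/2} ‖v(t)‖ dt < ∞. For λ > 0 set u(λ) := λ · ∫₀^∞ e^{−λt} v(t) dt, and let g : (0, ∞) → H satisfy, for all λ, λ' > 0, the identity (λ + λ')⟨u(λ), u(λ')⟩ = ‖g(λ) − g(λ')‖² + λ‖u(λ)‖² + λ'‖u(λ')‖². Then √λ · u(λ) → 0 in norm as λ → 0⁺, and there exists w ∈ H such that g(λ) → w in norm as λ → 0⁺. -/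

import Mathlib

open MeasureTheory RealInnerProductSpace Finset

section MWaux

lemma aux_exp_cube (x : ℝ) (hx : 0 ≤ x) :
    x * Real.sqrt x * Real.exp (-x) ≤ 27 * min x x⁻¹ := by
  by_cases hx1 : x ≤ 1
  · have h1 : Real.sqrt x ≤ 1 := by
      rw [show (1:ℝ) = Real.sqrt 1 by simp]
      exact Real.sqrt_le_sqrt hx1
    have h2 : Real.exp (-x) ≤ 1 := Real.exp_le_one_iff.mpr (by linarith)
    have hmin : min x x⁻¹ = x := by
      rcases eq_or_lt_of_le hx with h | h
      · simp [← h]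
      · refine min_eq_left ?_
        nlinarith [mul_inv_cancel₀ h.ne', inv_pos.mpr h]
    have h5 : Real.sqrt x * Real.exp (-x) ≤ 1 := by
      nlinarith [(Real.exp_pos (-x)).le, Real.sqrt_nonneg x]
    rw [hmin]
    calc x * Real.sqrt x * Real.exp (-x) = x * (Real.sqrt x * Real.exp (-x)) := by ring
    _ ≤ x * 1 := by nlinarith
    _ ≤ 27 * x := by linarith
  · push_neg at hx1
    have hxpos : 0 < x := by linarith
    have h3 : x ^ 3 ≤ 27 * Real.exp x := by
      have h := Real.add_one_le_exp (x / 3)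
      have hexp : Real.exp x = Real.exp (x / 3) ^ 3 := by
        rw [← Real.exp_nat_mul]; congr 1; push_cast; ring
      have h6 : (x / 3 + 1) ^ 3 ≤ Real.exp (x / 3) ^ 3 :=
        pow_le_pow_left₀ (by positivity) h 3
      rw [hexp]; nlinarith [h6, hxpos]
    have h4 : Real.sqrt x ≤ x := by
      have : Real.sqrt x ≤ Real.sqrt (x ^ 2) := Real.sqrt_le_sqrt (by nlinarith)
      rwa [Real.sqrt_sq hx] at this
    have hmin : min x x⁻¹ = x⁻¹ := by
      refine min_eq_right ?_
      nlinarith [mul_inv_cancel₀ hxpos.ne', inv_pos.mpr hxpos]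
    rw [hmin, Real.exp_neg]
    have hpos : 0 < x * Real.exp x := by positivity
    refine le_of_mul_le_mul_right ?_ hpos
    have e1 : x * Real.sqrt x * (Real.exp x)⁻¹ * (x * Real.exp x)
        = x * Real.sqrt x * x := by
      field_simp
    have e2 : 27 * x⁻¹ * (x * Real.exp x) = 27 * Real.exp x := by
      field_simp
    rw [e1, e2]
    nlinarith [h3, h4, hxpos, mul_nonneg (mul_nonneg (sub_nonneg.mpr h4) hx) hx]

lemma aux_geom_sum (x : ℝ) (hx : 0 < x) (N : ℕ) :
    ∑ j ∈ Finset.range N, min (x * (1/2)^j) (x * (1/2)^j)⁻¹ ≤ 4 := by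
  by_cases hx1 : x < 1
  · calc ∑ j ∈ Finset.range N, min (x * (1/2)^j) (x * (1/2)^j)⁻¹
        ≤ ∑ j ∈ Finset.range N, ((1:ℝ)/2)^j := by
          refine Finset.sum_le_sum fun j _ => ?_
          refine (min_le_left _ _).trans ?_
          have : (0:ℝ) < (1/2:ℝ)^j := by positivity
          nlinarith
    _ ≤ 2 := sum_geometric_two_le N
    _ ≤ 4 := by norm_num
  · push_neg at hx1
    set m : ℕ := ⌊x⌋₊ with hm
    have hm1 : 1 ≤ m := Nat.le_floor (by exact_mod_cast hx1)
    set n : ℕ := Nat.log 2 m with hn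
    have h2n : (2:ℝ)^n ≤ x := by
      calc ((2:ℝ))^n = ((2^n : ℕ) : ℝ) := by push_cast; ring
      _ ≤ (m : ℝ) := by exact_mod_cast Nat.pow_log_le_self 2 (by omega)
      _ ≤ x := Nat.floor_le hx.le
    have h2n' : x < (2:ℝ)^(n+1) := by
      have h1 : m < 2^(n+1) := Nat.lt_pow_succ_log_self (by norm_num) m
      have h2 : x < (m : ℝ) + 1 := Nat.lt_floor_add_one x
      have h3 : (m : ℝ) + 1 ≤ ((2:ℝ))^(n+1) := by
        exact_mod_cast (by omega : m + 1 ≤ 2^(n+1))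
      linarith
    have hbound : ∀ j : ℕ, min (x * (1/2)^j) (x * (1/2)^j)⁻¹
        ≤ if j ≤ n then ((1:ℝ)/2)^(n-j) else ((1:ℝ)/2)^(j-(n+1)) := by
      intro j
      split_ifs with hj
      · refine (min_le_right _ _).trans ?_
        rw [inv_le_comm₀ (by positivity) (by positivity)]
        have e : (((1:ℝ)/2)^(n-j))⁻¹ = 2^(n-j) := by
          rw [one_div, inv_pow, inv_inv]
        rw [e]
        have e3 : ((2:ℝ))^(n-j) = 2^n * (1/2)^j := by
          rw [one_div, inv_pow, ← pow_sub_mul_pow (2:ℝ) hj]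
          field_simp
        rw [e3]
        have hp : (0:ℝ) < (1/2)^j := by positivity
        nlinarith
      · push_neg at hj
        refine (min_le_left _ _).trans ?_
        have e3 : ((1:ℝ)/2)^(j-(n+1)) = 2^(n+1) * (1/2)^j := by
          have h5 : ((1:ℝ)/2)^(j-(n+1)) * ((1:ℝ)/2)^(n+1) = ((1:ℝ)/2)^j :=
            pow_sub_mul_pow ((1:ℝ)/2) hj
          have h12 : ((1:ℝ)/2)^(n+1) ≠ 0 := by positivity
          field_simp at h5 ⊢
          have hh : ((1:ℝ)/2)^(n+1) * 2^(n+1) = 1 := by rw [← mul_pow]; norm_num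
          have k1 : ((1:ℝ)/2)^(j-(n+1)) = ((1:ℝ)/2)^(j-(n+1)) * (((1:ℝ)/2)^(n+1) * 2^(n+1)) := by
            rw [hh, mul_one]
          have k2 : ((1:ℝ)/2)^(j-(n+1)) * ((1:ℝ)/2)^(n+1) * 2^(n+1) = ((1:ℝ)/2)^j * 2^(n+1) := by
            rw [h5]
          linarith [k1, k2]
        rw [e3]
        have hp : (0:ℝ) < (1/2)^j := by positivity
        nlinarith
    calc ∑ j ∈ Finset.range N, min (x * (1/2)^j) (x * (1/2)^j)⁻¹
        ≤ ∑ j ∈ Finset.range N,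
            (if j ≤ n then ((1:ℝ)/2)^(n-j) else ((1:ℝ)/2)^(j-(n+1))) :=
          Finset.sum_le_sum fun j _ => hbound j
    _ = (∑ j ∈ (Finset.range N).filter (fun j => j ≤ n), ((1:ℝ)/2)^(n-j))
        + ∑ j ∈ (Finset.range N).filter (fun j => ¬ j ≤ n), ((1:ℝ)/2)^(j-(n+1)) :=
          Finset.sum_ite _ _
    _ ≤ 2 + 2 := by
        gcongr
        · calc ∑ j ∈ (Finset.range N).filter (fun j => j ≤ n), ((1:ℝ)/2)^(n-j)
              ≤ ∑ j ∈ Finset.range (n+1), ((1:ℝ)/2)^(n-j) := by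
                refine Finset.sum_le_sum_of_subset_of_nonneg ?_ (fun j _ _ => by positivity)
                intro j hj
                simp only [Finset.mem_filter, Finset.mem_range] at hj ⊢
                omega
          _ = ∑ j ∈ Finset.range (n+1), ((1:ℝ)/2)^j := by
                rw [← Finset.sum_range_reflect (fun j => ((1:ℝ)/2)^j) (n+1)]
                exact Finset.sum_congr rfl fun j hj => by
                  simp only [Finset.mem_range] at hj
                  congr 1
          _ ≤ 2 := sum_geometric_two_le _
        · calc ∑ j ∈ (Finset.range N).filter (fun j => ¬ j ≤ n), ((1:ℝ)/2)^(j-(n+1))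
              ≤ ∑ j ∈ Finset.Ico (n+1) N, ((1:ℝ)/2)^(j-(n+1)) := by
                refine Finset.sum_le_sum_of_subset_of_nonneg ?_ (fun j _ _ => by positivity)
                intro j hj
                simp only [Finset.mem_filter, Finset.mem_range] at hj
                simp only [Finset.mem_Ico]
                omega
          _ = ∑ i ∈ Finset.range (N - (n+1)), ((1:ℝ)/2)^((n+1+i)-(n+1)) :=
                Finset.sum_Ico_eq_sum_range _ _ _
          _ = ∑ i ∈ Finset.range (N - (n+1)), ((1:ℝ)/2)^i := by
                refine Finset.sum_congr rfl fun i _ => by congr 1; omega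
          _ ≤ 2 := sum_geometric_two_le _
    _ ≤ 4 := by norm_num

lemma aux_rpow (t : ℝ) (ht : 0 < t) : t ^ (-(3:ℝ)/2) = (t * Real.sqrt t)⁻¹ := by
  rw [show (-(3:ℝ)/2) = -(3/2) by ring, Real.rpow_neg ht.le]
  congr 1
  rw [show ((3:ℝ)/2) = 1 + 1/2 by norm_num, Real.rpow_add ht, Real.rpow_one,
    ← Real.sqrt_eq_rpow]

lemma aux_min_le_one (x : ℝ) (hx : 0 ≤ x) : min x x⁻¹ ≤ 1 := by
  rcases le_or_gt x 1 with h | h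
  · exact (min_le_left _ _).trans h
  · refine (min_le_right _ _).trans ?_
    nlinarith [mul_inv_cancel₀ (by linarith : x ≠ 0),
      inv_pos.mpr (by linarith : (0:ℝ) < x)]

lemma aux_ker_min (l t : ℝ) (hl : 0 < l) (ht : 0 < t) :
    Real.sqrt l * l * Real.exp (-(l * t))
      ≤ (27 * (t * Real.sqrt t)⁻¹) * min (l*t) (l*t)⁻¹ := by
  have hts : 0 < t * Real.sqrt t := by positivity
  have h2 := aux_exp_cube (l*t) (by positivity)
  have key : (Real.sqrt l * l * Real.exp (-(l * t))) * (t * Real.sqrt t)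
      = (l*t) * Real.sqrt (l*t) * Real.exp (-(l*t)) := by
    rw [Real.sqrt_mul hl.le]
    ring
  refine le_of_mul_le_mul_right ?_ hts
  rw [key]
  refine h2.trans (le_of_eq ?_)
  field_simp

lemma aux_ker_crude (l t : ℝ) (hl : 0 < l) (ht : 0 < t) :
    Real.sqrt l * l * Real.exp (-(l * t)) ≤ 27 * (t * Real.sqrt t)⁻¹ := by
  refine (aux_ker_min l t hl ht).trans ?_
  have h1 := aux_min_le_one (l*t) (by positivity)
  have h2 : (0:ℝ) ≤ 27 * (t * Real.sqrt t)⁻¹ := by positivity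
  nlinarith [h1, h2, (by positivity : (0:ℝ) ≤ min (l*t) (l*t)⁻¹)]

lemma aux_step {H : Type*} [NormedAddCommGroup H] [InnerProductSpace ℝ H]
    (a b : ℝ) (ua ub ga gb : H) (ha : 0 < a) (hab : a ≤ b) (hb2 : b ≤ 2*a)
    (heq : (a + b) * ⟪ua, ub⟫ = ‖ga - gb‖^2 + a*‖ua‖^2 + b*‖ub‖^2) :
    ‖ga - gb‖ ≤ Real.sqrt a * ‖ua‖ + Real.sqrt b * ‖ub‖ := by
  have hb : 0 < b := lt_of_lt_of_le ha hab
  have hsa : Real.sqrt a ^ 2 = a := Real.sq_sqrt ha.le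
  have hsb : Real.sqrt b ^ 2 = b := Real.sq_sqrt hb.le
  have hsle : Real.sqrt a ≤ Real.sqrt b := Real.sqrt_le_sqrt hab
  have hA := norm_nonneg ua
  have hB := norm_nonneg ub
  have hsA := Real.sqrt_nonneg a
  have hsB := Real.sqrt_nonneg b
  have hinner := real_inner_le_norm ua ub
  have hsq : ‖ga - gb‖^2 ≤ (Real.sqrt a * ‖ua‖ + Real.sqrt b * ‖ub‖)^2 := by
    nlinarith [sq_nonneg (Real.sqrt a * ‖ua‖ - Real.sqrt b * ‖ub‖),
      mul_nonneg (mul_nonneg (sub_nonneg.mpr hsle) (mul_nonneg hA hB)) hsA,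
      mul_nonneg (mul_nonneg hA hB) hsA, sq_nonneg (‖ua‖ - ‖ub‖),
      mul_nonneg hA hB]
  calc ‖ga - gb‖ = Real.sqrt (‖ga - gb‖^2) := by
        rw [Real.sqrt_sq (norm_nonneg _)]
  _ ≤ Real.sqrt ((Real.sqrt a * ‖ua‖ + Real.sqrt b * ‖ub‖)^2) := Real.sqrt_le_sqrt hsq
  _ = Real.sqrt a * ‖ua‖ + Real.sqrt b * ‖ub‖ := Real.sqrt_sq (by positivity)

lemma aux_dyadic (l l' : ℝ) (hl' : 0 < l') (h : l' ≤ l) :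
    ∃ k : ℕ, l' ≤ l * (1/2)^k ∧ l * (1/2)^k ≤ 2 * l' := by
  have hl : 0 < l := lt_of_lt_of_le hl' h
  set r : ℝ := l / l' with hr
  have hr1 : 1 ≤ r := (one_le_div hl').mpr h
  set m : ℕ := ⌊r⌋₊ with hm
  have hm1 : 1 ≤ m := Nat.le_floor (by exact_mod_cast hr1)
  use Nat.log 2 m
  set k : ℕ := Nat.log 2 m with hk
  have h2k : (2:ℝ)^k ≤ r := by
    calc ((2:ℝ))^k = ((2^k : ℕ) : ℝ) := by push_cast; ring
    _ ≤ (m : ℝ) := by exact_mod_cast Nat.pow_log_le_self 2 (by omega)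
    _ ≤ r := Nat.floor_le (by linarith)
  have h2k' : r < (2:ℝ)^(k+1) := by
    have h1 : m < 2^(k+1) := Nat.lt_pow_succ_log_self (by norm_num) m
    have h2 : r < (m : ℝ) + 1 := Nat.lt_floor_add_one r
    have h3 : (m : ℝ) + 1 ≤ ((2:ℝ))^(k+1) := by
      exact_mod_cast (by omega : m + 1 ≤ 2^(k+1))
    linarith
  have hp : (0:ℝ) < (2:ℝ)^k := by positivity
  constructor
  · have h1 : l' * (2:ℝ)^k ≤ l := by
      rw [hr] at h2k
      calc l' * (2:ℝ)^k ≤ l' * (l / l') := by nlinarith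
      _ = l := by field_simp
    have e : l * (1/2:ℝ)^k = l / 2^k := by
      rw [one_div, inv_pow]; ring
    rw [e, le_div_iff₀ hp]
    linarith
  · have h1 : l < l' * (2:ℝ)^(k+1) := by
      rw [hr] at h2k'
      calc l = l' * (l / l') := by field_simp
      _ < l' * (2:ℝ)^(k+1) := mul_lt_mul_of_pos_left h2k' hl'
    have e : l * (1/2:ℝ)^k = l / 2^k := by rw [one_div, inv_pow]; ring
    rw [e, div_le_iff₀ hp]
    have e2 : l' * (2:ℝ)^(k+1) = 2 * l' * 2^k := by ring
    linarith [e2 ▸ h1]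

lemma aux_sqrt_mul_nonneg (p : ℝ) : 0 ≤ Real.sqrt p * p := by
  rcases le_or_gt 0 p with h | h
  · positivity
  · rw [Real.sqrt_eq_zero'.mpr h.le]
    simp

lemma aux_inv_ts_nonneg (t : ℝ) : 0 ≤ (t * Real.sqrt t)⁻¹ := by
  rcases le_or_gt 0 t with h | h
  · positivity
  · rw [Real.sqrt_eq_zero'.mpr h.le]
    simp

end MWaux

theorem stmt_15
    {H : Type*} [NormedAddCommGroup H] [InnerProductSpace ℝ H] [CompleteSpace H]
    (C : ℝ) (hC : 0 ≤ C) (v : ℝ → H)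
    (hmeas : AEStronglyMeasurable v (volume.restrict (Set.Ioi (0 : ℝ))))
    (hbdd : ∀ t : ℝ, 0 < t → ‖v t‖ ≤ C * t)
    (hint : IntegrableOn (fun t : ℝ => t ^ (-(3 : ℝ) / 2) * ‖v t‖) (Set.Ioi 0))
    (u g : ℝ → H)
    (hu : ∀ l : ℝ, 0 < l → u l = l • ∫ t in Set.Ioi (0 : ℝ), Real.exp (-l * t) • v t)
    (hid : ∀ l l' : ℝ, 0 < l → 0 < l' →
      (l + l') * ⟪u l, u l'⟫ =
        ‖g l - g l'‖ ^ 2 + l * ‖u l‖ ^ 2 + l' * ‖u l'‖ ^ 2) :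
    Filter.Tendsto (fun l : ℝ => Real.sqrt l • u l)
      (nhdsWithin 0 (Set.Ioi 0)) (nhds 0) ∧
    ∃ w : H, Filter.Tendsto g (nhdsWithin 0 (Set.Ioi 0)) (nhds w) := by
  have hμnorm : AEStronglyMeasurable (fun t => ‖v t‖) (volume.restrict (Set.Ioi (0:ℝ))) :=
    hmeas.norm
  have hint' : Integrable (fun t : ℝ => t ^ (-(3:ℝ)/2) * ‖v t‖)
      (volume.restrict (Set.Ioi (0:ℝ))) := hint
  have hmem : ∀ᵐ t ∂(volume.restrict (Set.Ioi (0:ℝ))), t ∈ Set.Ioi (0:ℝ) :=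
    ae_restrict_mem measurableSet_Ioi
  have hker_cont : ∀ l : ℝ, Continuous (fun t : ℝ => Real.sqrt l * l * Real.exp (-(l * t))) := by
    intro l; fun_prop
  -- integrability of the kernel against ‖v‖
  have hbbint : ∀ p : ℝ, 0 < p → Integrable
      (fun t => Real.sqrt p * p * Real.exp (-(p * t)) * ‖v t‖)
      (volume.restrict (Set.Ioi (0:ℝ))) := by
    intro p hp
    refine Integrable.mono' (hint'.const_mul 27)
      (((hker_cont p).aestronglyMeasurable).mul hμnorm) ?_
    filter_upwards [hmem] with t ht
    have ht0 : (0:ℝ) < t := ht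
    have hnn : (0:ℝ) ≤ Real.sqrt p * p * Real.exp (-(p * t)) * ‖v t‖ :=
      mul_nonneg (mul_nonneg (mul_nonneg (Real.sqrt_nonneg p) hp.le)
        (Real.exp_pos _).le) (norm_nonneg _)
    rw [Real.norm_eq_abs, abs_of_nonneg hnn]
    calc Real.sqrt p * p * Real.exp (-(p * t)) * ‖v t‖
        ≤ (27 * (t * Real.sqrt t)⁻¹) * ‖v t‖ :=
          mul_le_mul_of_nonneg_right (aux_ker_crude p t hp ht0) (norm_nonneg _)
    _ = 27 * (t ^ (-(3:ℝ)/2) * ‖v t‖) := by rw [aux_rpow t ht0]; ring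
  set bb : ℝ → ℝ := fun p =>
    ∫ t in Set.Ioi (0:ℝ), Real.sqrt p * p * Real.exp (-(p * t)) * ‖v t‖ with hbbdef
  have hbb_nonneg : ∀ p : ℝ, 0 < p → 0 ≤ bb p := by
    intro p hp
    refine integral_nonneg fun t => ?_
    exact mul_nonneg (mul_nonneg (mul_nonneg (Real.sqrt_nonneg p) hp.le)
      (Real.exp_pos _).le) (norm_nonneg _)
  -- φ(l) := √l ‖u l‖ ≤ bb l
  have hφ : ∀ l : ℝ, 0 < l → Real.sqrt l * ‖u l‖ ≤ bb l := by
    intro l hl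
    have hbb_eq : bb l = (Real.sqrt l * l) *
        ∫ t in Set.Ioi (0:ℝ), Real.exp (-(l*t)) * ‖v t‖ := by
      rw [hbbdef, ← integral_const_mul]
      exact integral_congr_ae (Filter.Eventually.of_forall fun t => by ring)
    have h1 : ‖∫ t in Set.Ioi (0:ℝ), Real.exp (-l * t) • v t‖
        ≤ ∫ t in Set.Ioi (0:ℝ), Real.exp (-(l*t)) * ‖v t‖ := by
      refine (norm_integral_le_integral_norm _).trans (le_of_eq ?_)
      refine integral_congr_ae (Filter.Eventually.of_forall fun t => ?_)
      simp [norm_smul, Real.abs_exp, neg_mul]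
    rw [hu l hl, norm_smul, Real.norm_eq_abs, abs_of_pos hl, hbb_eq]
    calc Real.sqrt l * (l * ‖∫ t in Set.Ioi (0:ℝ), Real.exp (-l * t) • v t‖)
        = (Real.sqrt l * l) * ‖∫ t in Set.Ioi (0:ℝ), Real.exp (-l * t) • v t‖ := by ring
    _ ≤ (Real.sqrt l * l) * ∫ t in Set.Ioi (0:ℝ), Real.exp (-(l*t)) * ‖v t‖ :=
        mul_le_mul_of_nonneg_left h1 (mul_nonneg (Real.sqrt_nonneg l) hl.le)
  -- the dominating kernel W and its integral BB
  set W : ℝ → ℝ → ℝ := fun p t =>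
    min (2 * (Real.sqrt p * p)) (108 * (t * Real.sqrt t)⁻¹) with hWdef
  have hW_nonneg : ∀ p t : ℝ, 0 ≤ W p t := by
    intro p t
    exact le_min (by nlinarith [aux_sqrt_mul_nonneg p])
      (by nlinarith [aux_inv_ts_nonneg t])
  have hW_meas : ∀ p : ℝ, AEStronglyMeasurable (fun t => W p t * ‖v t‖)
      (volume.restrict (Set.Ioi (0:ℝ))) := by
    intro p
    refine AEStronglyMeasurable.mul ?_ hμnorm
    refine Measurable.aestronglyMeasurable ?_
    exact measurable_const.min
      (((measurable_id.mul Real.continuous_sqrt.measurable).inv).const_mul 108)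
  have hW_bound : ∀ p : ℝ, ∀ᵐ t ∂(volume.restrict (Set.Ioi (0:ℝ))),
      ‖W p t * ‖v t‖‖ ≤ 108 * (t ^ (-(3:ℝ)/2) * ‖v t‖) := by
    intro p
    filter_upwards [hmem] with t ht
    have ht0 : (0:ℝ) < t := ht
    rw [Real.norm_eq_abs, abs_of_nonneg (mul_nonneg (hW_nonneg p t) (norm_nonneg _))]
    calc W p t * ‖v t‖ ≤ (108 * (t * Real.sqrt t)⁻¹) * ‖v t‖ :=
          mul_le_mul_of_nonneg_right (min_le_right _ _) (norm_nonneg _)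
    _ = 108 * (t ^ (-(3:ℝ)/2) * ‖v t‖) := by rw [aux_rpow t ht0]; ring
  have hWint : ∀ p : ℝ, Integrable (fun t => W p t * ‖v t‖)
      (volume.restrict (Set.Ioi (0:ℝ))) := by
    intro p
    exact Integrable.mono' (hint'.const_mul 108) (hW_meas p) (hW_bound p)
  set BB : ℝ → ℝ := fun p => ∫ t in Set.Ioi (0:ℝ), W p t * ‖v t‖ with hBBdef
  -- partial sums of kernels are dominated by W
  have hsum_le_W : ∀ l : ℝ, 0 < l → ∀ t : ℝ, 0 < t → ∀ N : ℕ,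
      ∑ j ∈ Finset.range N, Real.sqrt (l*(1/2)^j) * (l*(1/2)^j) *
        Real.exp (-((l*(1/2)^j) * t)) ≤ W l t := by
    intro l hl t ht N
    refine le_min ?_ ?_
    · calc ∑ j ∈ Finset.range N, Real.sqrt (l*(1/2)^j) * (l*(1/2)^j) *
            Real.exp (-((l*(1/2)^j) * t))
          ≤ ∑ j ∈ Finset.range N, (Real.sqrt l * l) * (1/2)^j := by
            refine Finset.sum_le_sum fun j _ => ?_
            have hq : (0:ℝ) < (1/2:ℝ)^j := by positivity
            have hq1 : ((1:ℝ)/2)^j ≤ 1 := pow_le_one₀ (by norm_num) (by norm_num)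
            have e1 : Real.sqrt (l*(1/2)^j) ≤ Real.sqrt l :=
              Real.sqrt_le_sqrt (by nlinarith)
            have e2 : Real.exp (-((l*(1/2)^j) * t)) ≤ 1 :=
              Real.exp_le_one_iff.mpr (by nlinarith [mul_pos (mul_pos hl hq) ht])
            calc Real.sqrt (l*(1/2)^j) * (l*(1/2)^j) * Real.exp (-((l*(1/2)^j) * t))
                ≤ Real.sqrt l * (l*(1/2)^j) * 1 := by
                  refine mul_le_mul (mul_le_mul e1 le_rfl (by positivity)
                    (Real.sqrt_nonneg l)) e2 (Real.exp_pos _).le ?_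
                  positivity
            _ = (Real.sqrt l * l) * (1/2)^j := by ring
      _ = (Real.sqrt l * l) * ∑ j ∈ Finset.range N, ((1:ℝ)/2)^j := by
            rw [Finset.mul_sum]
      _ ≤ (Real.sqrt l * l) * 2 :=
            mul_le_mul_of_nonneg_left (sum_geometric_two_le N) (aux_sqrt_mul_nonneg l)
      _ = 2 * (Real.sqrt l * l) := by ring
    · calc ∑ j ∈ Finset.range N, Real.sqrt (l*(1/2)^j) * (l*(1/2)^j) *
            Real.exp (-((l*(1/2)^j) * t))
          ≤ ∑ j ∈ Finset.range N,
              (27 * (t * Real.sqrt t)⁻¹) * min ((l*t)*(1/2)^j) ((l*t)*(1/2)^j)⁻¹ := by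
            refine Finset.sum_le_sum fun j _ => ?_
            have hp : (0:ℝ) < l*(1/2)^j := by positivity
            have h := aux_ker_min (l*(1/2)^j) t hp ht
            rw [show (l*t)*(1/2:ℝ)^j = (l*(1/2)^j)*t by ring]
            exact h
      _ = (27 * (t * Real.sqrt t)⁻¹) *
            ∑ j ∈ Finset.range N, min ((l*t)*(1/2)^j) ((l*t)*(1/2)^j)⁻¹ := by
            rw [Finset.mul_sum]
      _ ≤ (27 * (t * Real.sqrt t)⁻¹) * 4 := by
            refine mul_le_mul_of_nonneg_left (aux_geom_sum (l*t) (by positivity) N) ?_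
            nlinarith [aux_inv_ts_nonneg t]
      _ = 108 * (t * Real.sqrt t)⁻¹ := by ring
  -- partial sums of bb are dominated by BB
  have hE : ∀ l : ℝ, 0 < l → ∀ N : ℕ,
      ∑ j ∈ Finset.range N, bb (l*(1/2)^j) ≤ BB l := by
    intro l hl N
    have hpow : ∀ j : ℕ, (0:ℝ) < l*(1/2:ℝ)^j := fun j => by positivity
    have h1 : ∑ j ∈ Finset.range N, bb (l*(1/2)^j)
        = ∫ t in Set.Ioi (0:ℝ), ∑ j ∈ Finset.range N,
            Real.sqrt (l*(1/2)^j) * (l*(1/2)^j) * Real.exp (-((l*(1/2)^j) * t)) * ‖v t‖ :=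
      (integral_finset_sum _ (fun j _ => hbbint _ (hpow j))).symm
    rw [h1]
    refine integral_mono_ae (integrable_finset_sum _ fun j _ => hbbint _ (hpow j))
      (hWint l) ?_
    filter_upwards [hmem] with t ht
    calc ∑ j ∈ Finset.range N,
          Real.sqrt (l*(1/2)^j) * (l*(1/2)^j) * Real.exp (-((l*(1/2)^j) * t)) * ‖v t‖
        = (∑ j ∈ Finset.range N,
            Real.sqrt (l*(1/2)^j) * (l*(1/2)^j) * Real.exp (-((l*(1/2)^j) * t))) * ‖v t‖ := by
          rw [Finset.sum_mul]
    _ ≤ W l t * ‖v t‖ :=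
          mul_le_mul_of_nonneg_right (hsum_le_W l hl t ht N) (norm_nonneg _)
  -- BB tends to 0
  have hBB0 : Filter.Tendsto BB (nhdsWithin 0 (Set.Ioi 0)) (nhds 0) := by
    have hdct := tendsto_integral_filter_of_dominated_convergence
      (μ := volume.restrict (Set.Ioi (0:ℝ)))
      (l := nhdsWithin (0:ℝ) (Set.Ioi 0))
      (F := fun p t => W p t * ‖v t‖) (f := fun _ => (0:ℝ))
      (bound := fun t => 108 * (t ^ (-(3:ℝ)/2) * ‖v t‖))
      (Filter.Eventually.of_forall hW_meas)
      (Filter.Eventually.of_forall hW_bound)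
      (hint'.const_mul 108) ?_
    · simpa using hdct
    · filter_upwards [hmem] with t ht
      have hup : Filter.Tendsto (fun p : ℝ => 2 * (Real.sqrt p * p) * ‖v t‖)
          (nhdsWithin 0 (Set.Ioi 0)) (nhds 0) := by
        have hc : Continuous fun p : ℝ => 2 * (Real.sqrt p * p) * ‖v t‖ := by fun_prop
        have := (hc.tendsto 0).mono_left (nhdsWithin_le_nhds (s := Set.Ioi (0:ℝ)))
        simpa using this
      refine squeeze_zero (fun p => mul_nonneg (hW_nonneg p t) (norm_nonneg _))
        (fun p => ?_) hup
      exact mul_le_mul_of_nonneg_right (min_le_left _ _) (norm_nonneg _)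
  -- master estimate
  have hmaster : ∀ l : ℝ, 0 < l → ∀ l' : ℝ, 0 < l' → l' ≤ l →
      ‖g l' - g l‖ ≤ 5 * BB l := by
    intro l hl l' hl' hle
    obtain ⟨k, hk1, hk2⟩ := aux_dyadic l l' hl' hle
    have hpow : ∀ j : ℕ, (0:ℝ) < l*(1/2:ℝ)^j := fun j => by positivity
    have hstep' : ∀ a b : ℝ, 0 < a → a ≤ b → b ≤ 2*a → ‖g a - g b‖ ≤ bb a + bb b := by
      intro a b ha hab hb2
      have hb : 0 < b := lt_of_lt_of_le ha hab
      have h := aux_step a b (u a) (u b) (g a) (g b) ha hab hb2 (hid a b ha hb)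
      refine h.trans (add_le_add (hφ a ha) (hφ b hb))
    have hconsec : ∀ j : ℕ, dist (g (l*(1/2)^j)) (g (l*(1/2)^(j+1)))
        ≤ bb (l*(1/2)^(j+1)) + bb (l*(1/2)^j) := by
      intro j
      have hle1 : l*(1/2:ℝ)^(j+1) ≤ l*(1/2)^j := by
        have e : l*(1/2:ℝ)^(j+1) = (l*(1/2)^j)/2 := by ring
        have := hpow j
        linarith
      have hle2 : l*(1/2:ℝ)^j ≤ 2*(l*(1/2)^(j+1)) := le_of_eq (by ring)
      have h := hstep' (l*(1/2)^(j+1)) (l*(1/2)^j) (hpow (j+1)) hle1 hle2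
      rw [dist_eq_norm, norm_sub_rev]
      exact h
    have htel : dist (g (l*(1/2:ℝ)^0)) (g (l*(1/2)^k))
        ≤ ∑ j ∈ Finset.range k, (bb (l*(1/2)^(j+1)) + bb (l*(1/2)^j)) :=
      (dist_le_range_sum_dist (fun j => g (l*(1/2)^j)) k).trans
        (Finset.sum_le_sum fun j _ => hconsec j)
    have hsum : ∑ j ∈ Finset.range k, (bb (l*(1/2)^(j+1)) + bb (l*(1/2)^j)) ≤ 2 * BB l := by
      rw [Finset.sum_add_distrib]
      have hA : ∑ j ∈ Finset.range k, bb (l*(1/2)^(j+1)) ≤ BB l := by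
        have e : (∑ j ∈ Finset.range (k+1), bb (l*(1/2:ℝ)^j))
            = (∑ j ∈ Finset.range k, bb (l*(1/2:ℝ)^(j+1))) + bb (l*(1/2:ℝ)^0) :=
          Finset.sum_range_succ' _ k
        have h0 : 0 ≤ bb (l*(1/2:ℝ)^0) := hbb_nonneg _ (hpow 0)
        have := hE l hl (k+1)
        linarith
      have hB : ∑ j ∈ Finset.range k, bb (l*(1/2)^j) ≤ BB l := hE l hl k
      linarith
    have hlast : ‖g l' - g (l*(1/2)^k)‖ ≤ bb l' + bb (l*(1/2)^k) :=
      hstep' l' (l*(1/2)^k) hl' hk1 hk2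
    -- bb l' ≤ 3 * bb (l*(1/2)^(k+1))
    have hbbl' : bb l' ≤ 3 * bb (l*(1/2)^(k+1)) := by
      set a : ℝ := l*(1/2:ℝ)^(k+1) with ha
      have hap : 0 < a := hpow (k+1)
      have hal : a ≤ l' := by
        have : l*(1/2:ℝ)^(k+1) = (l*(1/2)^k)/2 := by ring
        rw [ha, this]
        linarith
      have hl2a : l' ≤ 2*a := by
        have : 2*a = l*(1/2:ℝ)^k := by rw [ha]; ring
        rw [this]
        exact hk1
      have hsc : ∀ t : ℝ, 0 < t →
          Real.sqrt l' * l' * Real.exp (-(l'*t)) ≤ 3 * (Real.sqrt a * a * Real.exp (-(a*t))) := by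
        intro t ht
        have h2' : Real.sqrt 2 ≤ 3/2 := by
          nlinarith [Real.sq_sqrt (by norm_num : (0:ℝ) ≤ 2), Real.sqrt_nonneg 2]
        have hs : Real.sqrt l' ≤ (3/2) * Real.sqrt a := by
          calc Real.sqrt l' ≤ Real.sqrt (2*a) := Real.sqrt_le_sqrt (by linarith)
          _ = Real.sqrt 2 * Real.sqrt a := Real.sqrt_mul (by norm_num) a
          _ ≤ (3/2) * Real.sqrt a :=
              mul_le_mul_of_nonneg_right h2' (Real.sqrt_nonneg a)
        have hpre : Real.sqrt l' * l' ≤ 3 * (Real.sqrt a * a) := by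
          calc Real.sqrt l' * l' ≤ ((3/2) * Real.sqrt a) * l' :=
                mul_le_mul_of_nonneg_right hs hl'.le
          _ ≤ ((3/2) * Real.sqrt a) * (2*a) := by
                refine mul_le_mul_of_nonneg_left hl2a ?_
                positivity
          _ = 3 * (Real.sqrt a * a) := by ring
        have hexp : Real.exp (-(l'*t)) ≤ Real.exp (-(a*t)) := by
          refine Real.exp_le_exp.mpr ?_
          nlinarith
        calc Real.sqrt l' * l' * Real.exp (-(l'*t))
            ≤ (3 * (Real.sqrt a * a)) * Real.exp (-(a*t)) := by
              refine mul_le_mul hpre hexp (Real.exp_pos _).le ?_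
              positivity
        _ = 3 * (Real.sqrt a * a * Real.exp (-(a*t))) := by ring
      have hmono : bb l' ≤ ∫ t in Set.Ioi (0:ℝ),
          3 * (Real.sqrt a * a * Real.exp (-(a*t)) * ‖v t‖) := by
        refine integral_mono_ae (hbbint l' hl') ((hbbint a hap).const_mul 3) ?_
        filter_upwards [hmem] with t ht
        have := hsc t ht
        calc Real.sqrt l' * l' * Real.exp (-(l'*t)) * ‖v t‖
            ≤ (3 * (Real.sqrt a * a * Real.exp (-(a*t)))) * ‖v t‖ :=
              mul_le_mul_of_nonneg_right this (norm_nonneg _)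
        _ = 3 * (Real.sqrt a * a * Real.exp (-(a*t)) * ‖v t‖) := by ring
      rw [integral_const_mul] at hmono
      exact hmono
    have hpair : bb (l*(1/2)^k) + bb (l*(1/2)^(k+1)) ≤ BB l := by
      have h1 : (∑ j ∈ Finset.range (k+2), bb (l*(1/2:ℝ)^j))
          = (∑ j ∈ Finset.range (k+1), bb (l*(1/2:ℝ)^j)) + bb (l*(1/2:ℝ)^(k+1)) :=
        Finset.sum_range_succ _ (k+1)
      have h2 : (∑ j ∈ Finset.range (k+1), bb (l*(1/2:ℝ)^j))
          = (∑ j ∈ Finset.range k, bb (l*(1/2:ℝ)^j)) + bb (l*(1/2:ℝ)^k) :=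
        Finset.sum_range_succ _ k
      have h3 : 0 ≤ ∑ j ∈ Finset.range k, bb (l*(1/2:ℝ)^j) :=
        Finset.sum_nonneg fun j _ => hbb_nonneg _ (hpow j)
      have h4 := hE l hl (k+2)
      linarith
    have e0 : l*(1/2:ℝ)^0 = l := by norm_num
    have hdist : dist (g (l*(1/2:ℝ)^0)) (g (l*(1/2)^k)) = ‖g (l*(1/2)^k) - g l‖ := by
      rw [e0, dist_eq_norm, norm_sub_rev]
    calc ‖g l' - g l‖ ≤ ‖g l' - g (l*(1/2)^k)‖ + ‖g (l*(1/2)^k) - g l‖ :=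
          norm_sub_le_norm_sub_add_norm_sub _ _ _
    _ ≤ (bb l' + bb (l*(1/2)^k)) + ∑ j ∈ Finset.range k,
          (bb (l*(1/2)^(j+1)) + bb (l*(1/2)^j)) := by
        rw [← hdist]
        exact add_le_add hlast htel
    _ ≤ 5 * BB l := by
        have := hbb_nonneg (l*(1/2:ℝ)^(k+1)) (hpow (k+1))
        have := hbb_nonneg (l*(1/2:ℝ)^k) (hpow k)
        linarith [hbbl', hpair, hsum]
  -- Part 1
  have hpart1 : Filter.Tendsto (fun l : ℝ => Real.sqrt l • u l)
      (nhdsWithin 0 (Set.Ioi 0)) (nhds 0) := by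
    have hdct := tendsto_integral_filter_of_dominated_convergence
      (μ := volume.restrict (Set.Ioi (0:ℝ)))
      (l := nhdsWithin (0:ℝ) (Set.Ioi 0))
      (F := fun p (t:ℝ) => (Real.sqrt p * p * Real.exp (-(p*t))) • v t)
      (f := fun _ => (0:H))
      (bound := fun t => 27 * (t ^ (-(3:ℝ)/2) * ‖v t‖))
      (Filter.Eventually.of_forall fun p =>
        ((hker_cont p).aestronglyMeasurable).smul hmeas) ?_ (hint'.const_mul 27) ?_
    · have heq : (fun p : ℝ => ∫ t in Set.Ioi (0:ℝ),
            (Real.sqrt p * p * Real.exp (-(p*t))) • v t)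
          =ᶠ[nhdsWithin (0:ℝ) (Set.Ioi 0)] (fun p => Real.sqrt p • u p) := by
        filter_upwards [self_mem_nhdsWithin] with p hp
        rw [hu p hp, smul_smul, ← integral_smul]
        refine integral_congr_ae (Filter.Eventually.of_forall fun t => ?_)
        simp [smul_smul, neg_mul]
      have := hdct.congr' heq
      simpa using this
    · filter_upwards [self_mem_nhdsWithin] with p hp
      have hp0 : (0:ℝ) < p := hp
      filter_upwards [hmem] with t ht
      have ht0 : (0:ℝ) < t := ht
      rw [norm_smul, Real.norm_eq_abs,
        abs_of_nonneg (mul_nonneg (mul_nonneg (Real.sqrt_nonneg p) hp0.le)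
          (Real.exp_pos _).le)]
      calc Real.sqrt p * p * Real.exp (-(p*t)) * ‖v t‖
          ≤ (27 * (t * Real.sqrt t)⁻¹) * ‖v t‖ :=
            mul_le_mul_of_nonneg_right (aux_ker_crude p t hp0 ht0) (norm_nonneg _)
      _ = 27 * (t ^ (-(3:ℝ)/2) * ‖v t‖) := by rw [aux_rpow t ht0]; ring
    · filter_upwards [hmem] with t ht
      have hc : Continuous fun p : ℝ => Real.sqrt p * p * Real.exp (-(p*t)) := by fun_prop
      have h0 : Filter.Tendsto (fun p : ℝ => Real.sqrt p * p * Real.exp (-(p*t)))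
          (nhdsWithin 0 (Set.Ioi 0)) (nhds 0) := by
        have := (hc.tendsto 0).mono_left (nhdsWithin_le_nhds
          (s := Set.Ioi (0:ℝ)))
        simpa using this
      have := h0.smul_const (v t)
      simpa using this
  refine ⟨hpart1, ?_⟩
  -- Cauchy-ness of g along the filter
  have hcauchy : Cauchy (Filter.map g (nhdsWithin (0:ℝ) (Set.Ioi 0))) := by
    rw [Metric.cauchy_iff]
    constructor
    · exact Filter.NeBot.map (by infer_instance) g
    · intro ε hε
      have h11 : (0:ℝ) < ε/11 := by linarith
      rw [Metric.tendsto_nhdsWithin_nhds] at hBB0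
      obtain ⟨δ, hδ, hδ'⟩ := hBB0 (ε/11) h11
      set d : ℝ := min (δ/2) 1 with hd
      have hd0 : 0 < d := lt_min (by linarith) one_pos
      have hdd : dist d (0:ℝ) < δ := by
        rw [Real.dist_eq, sub_zero, abs_of_pos hd0]
        calc d ≤ δ/2 := min_le_left _ _
        _ < δ := by linarith
      have hBBd : BB d < ε/11 := by
        have := hδ' (Set.mem_Ioi.mpr hd0) hdd
        rw [Real.dist_eq, sub_zero] at this
        exact lt_of_le_of_lt (le_abs_self _) this
      refine ⟨g '' Set.Ioc 0 d,
        Filter.image_mem_map (Ioc_mem_nhdsGT_of_mem ⟨le_refl 0, hd0⟩), ?_⟩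
      rintro x ⟨s, hs, rfl⟩ y ⟨r, hr, rfl⟩
      have h1 : ‖g s - g d‖ ≤ 5 * BB d := hmaster d hd0 s hs.1 hs.2
      have h2 : ‖g r - g d‖ ≤ 5 * BB d := hmaster d hd0 r hr.1 hr.2
      calc dist (g s) (g r) ≤ dist (g s) (g d) + dist (g d) (g r) := dist_triangle _ _ _
      _ = ‖g s - g d‖ + ‖g r - g d‖ := by
          rw [dist_eq_norm, dist_eq_norm, norm_sub_rev (g d)]
      _ ≤ 10 * BB d := by linarith
      _ < ε := by linarith
  obtain ⟨w, hw⟩ := CompleteSpace.complete hcauchy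
  exact ⟨w, hw⟩
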